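/- Let J be a maximal ideal on ℕ, let δ(A) = J-lim_n |A ∩ {1,...,n}|/n, and let I = Z_δ. Then I is a translation invariant ideal and every I-almost-disjoint family is countable; in particular there is no I-TAD family of cardinality continuum. -/

import Mathlib

open Set Filter
open scoped Classical

/-- The shift of a set of naturals by an integer `k`, i.e. `(A + k) ∩ ℕ`. -/
def shiftSet (A : Set ℕ) (k : ℤ) : Set ℕ := {n : ℕ | ∃ a ∈ A, (a : ℤ) + k = (n : ℤ)}

/-- An ideal on ℕ. -/
def IsIdeal (I : Set (Set ℕ)) : Prop :=
  (∀ A B : Set ℕ, A ∈ I → B ∈ I → A ∪ B ∈ I) ∧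
  (∀ A B : Set ℕ, A ⊆ B → B ∈ I → A ∈ I) ∧
  (∀ A : Set ℕ, A.Finite → A ∈ I) ∧
  (Set.univ : Set ℕ) ∉ I

/-- A translation invariant ideal on ℕ. -/
def TransInvIdeal (I : Set (Set ℕ)) : Prop :=
  IsIdeal I ∧ ∀ A ∈ I, ∀ k : ℤ, shiftSet A k ∈ I

/-- An abstract upper density on ℕ. -/
def IsAUD (δ : Set ℕ → ℝ) : Prop :=
  (∀ A : Set ℕ, 0 ≤ δ A ∧ δ A ≤ 1) ∧
  δ Set.univ = 1 ∧
  (∀ A : Set ℕ, A.Finite → δ A = 0) ∧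
  (∀ A B : Set ℕ, A ⊆ B → δ A ≤ δ B) ∧
  (∀ A B : Set ℕ, δ (A ∪ B) ≤ δ A + δ B)

/-- A translation invariant density. -/
def TransInvAUD (δ : Set ℕ → ℝ) : Prop := ∀ (A : Set ℕ) (k : ℤ), δ (shiftSet A k) = δ A

/-- A rich density: onto [0,1]. -/
def Rich (δ : Set ℕ → ℝ) : Prop := ∀ r ∈ Set.Icc (0:ℝ) 1, ∃ A : Set ℕ, δ A = r

/-- The family of null sets of a density. -/
def ZSet (δ : Set ℕ → ℝ) : Set (Set ℕ) := {A | δ A = 0}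

/-- An `I`-almost disjoint family. -/
def IsADFamily (I : Set (Set ℕ)) (𝒜 : Set (Set ℕ)) : Prop :=
  (∀ A ∈ 𝒜, A ∉ I) ∧ ∀ A ∈ 𝒜, ∀ B ∈ 𝒜, A ≠ B → A ∩ B ∈ I

/-- An `I`-translation almost disjoint family. -/
def IsTADFamily (I : Set (Set ℕ)) (𝒜 : Set (Set ℕ)) : Prop :=
  (∀ A ∈ 𝒜, A ∉ I) ∧ ∀ A ∈ 𝒜, ∀ B ∈ 𝒜, A ≠ B → ∀ k : ℤ, A ∩ shiftSet B k ∈ I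

/-- A maximal ideal on ℕ. -/
def MaximalIdeal (I : Set (Set ℕ)) : Prop :=
  IsIdeal I ∧ ∀ J : Set (Set ℕ), IsIdeal J → I ⊆ J → I = J

/-- An ideal on a subset `X` of ℕ. -/
def IsIdealOn (X : Set ℕ) (I : Set (Set ℕ)) : Prop :=
  (∀ A ∈ I, A ⊆ X) ∧
  (∀ A B : Set ℕ, A ∈ I → B ∈ I → A ∪ B ∈ I) ∧
  (∀ A B : Set ℕ, A ⊆ B → B ∈ I → A ∈ I) ∧
  (∀ A : Set ℕ, A ⊆ X → A.Finite → A ∈ I) ∧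
  X ∉ I

/-- A maximal ideal on a subset `X` of ℕ. -/
def MaximalIdealOn (X : Set ℕ) (I : Set (Set ℕ)) : Prop :=
  IsIdealOn X I ∧ ∀ A : Set ℕ, A ⊆ X → (A ∈ I ∨ X \ A ∈ I)

/-- The translation-invariant kernel of an ideal. -/
def tIdeal (I : Set (Set ℕ)) : Set (Set ℕ) := {A | ∀ k : ℤ, shiftSet A k ∈ I}

/-- A T-maximal ideal: maximal among translation invariant ideals. -/
def TMaximalIdeal (I : Set (Set ℕ)) : Prop :=
  TransInvIdeal I ∧ ∀ J : Set (Set ℕ), TransInvIdeal J → I ⊆ J → I = J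



/-- count of elements of `s` in `A` (with a uniform classical instance). -/
noncomputable def cnt (A : Set ℕ) (s : Finset ℕ) : ℕ := (s.filter (· ∈ A)).card

noncomputable def dFn (A : Set ℕ) (n : ℕ) : ℝ := cnt A (Finset.Icc 1 n) / (n : ℝ)

lemma dFn_nonneg (A : Set ℕ) (n : ℕ) : 0 ≤ dFn A n := by unfold dFn; positivity

lemma cnt_univ (n : ℕ) : cnt Set.univ (Finset.Icc 1 n) = n := by
  unfold cnt
  simp [Nat.card_Icc]

lemma cnt_mono_set {A B : Set ℕ} (h : A ⊆ B) (s : Finset ℕ) : cnt A s ≤ cnt B s := by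
  unfold cnt
  apply Finset.card_le_card
  intro x hx
  simp only [Finset.mem_filter] at hx ⊢
  exact ⟨hx.1, h hx.2⟩

lemma dFn_le_one (A : Set ℕ) (n : ℕ) : dFn A n ≤ 1 := by
  unfold dFn cnt
  rcases Nat.eq_zero_or_pos n with h | h
  · simp [h]
  · rw [div_le_one (by exact_mod_cast h)]
    have h1 := Finset.card_filter_le (Finset.Icc 1 n) (· ∈ A)
    have h2 : (Finset.Icc 1 n).card = n := by simp
    exact_mod_cast h1.trans_eq h2

lemma dFn_mono {A B : Set ℕ} (h : A ⊆ B) (n : ℕ) : dFn A n ≤ dFn B n := by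
  unfold dFn
  exact div_le_div_of_nonneg_right (by exact_mod_cast cnt_mono_set h _) (by positivity)

lemma cnt_modular (A B : Set ℕ) (s : Finset ℕ) :
    cnt (A ∪ B) s + cnt (A ∩ B) s = cnt A s + cnt B s := by
  unfold cnt
  induction s using Finset.induction_on with
  | empty => simp
  | @insert a s ha ih =>
    rw [Finset.filter_insert, Finset.filter_insert, Finset.filter_insert, Finset.filter_insert]
    have h1 : ∀ (p : ℕ → Prop) (inst : DecidablePred p), a ∉ s.filter p :=
      fun p inst hc => ha (Finset.mem_filter.mp hc).1
    by_cases hA : a ∈ A <;> by_cases hB : a ∈ B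
    · rw [if_pos (show a ∈ A ∪ B from Or.inl hA), if_pos (show a ∈ A ∩ B from ⟨hA, hB⟩),
        if_pos hA, if_pos hB, Finset.card_insert_of_notMem (h1 _ _),
        Finset.card_insert_of_notMem (h1 _ _), Finset.card_insert_of_notMem (h1 _ _),
        Finset.card_insert_of_notMem (h1 _ _)]
      omega
    · rw [if_pos (show a ∈ A ∪ B from Or.inl hA),
        if_neg (show a ∉ A ∩ B from fun h => hB h.2), if_pos hA, if_neg hB,
        Finset.card_insert_of_notMem (h1 _ _), Finset.card_insert_of_notMem (h1 _ _)]
      omega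
    · rw [if_pos (show a ∈ A ∪ B from Or.inr hB),
        if_neg (show a ∉ A ∩ B from fun h => hA h.1), if_neg hA, if_pos hB,
        Finset.card_insert_of_notMem (h1 _ _), Finset.card_insert_of_notMem (h1 _ _)]
      omega
    · rw [if_neg (show a ∉ A ∪ B from fun h => h.elim hA hB),
        if_neg (show a ∉ A ∩ B from fun h => hA h.1), if_neg hA, if_neg hB]
      omega

lemma dFn_modular (A B : Set ℕ) (n : ℕ) :
    dFn (A ∪ B) n + dFn (A ∩ B) n = dFn A n + dFn B n := by
  unfold dFn
  rw [← add_div, ← add_div]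
  congr 1
  exact_mod_cast cnt_modular A B (Finset.Icc 1 n)

lemma cnt_mono_n (A : Set ℕ) (n j : ℕ) :
    cnt A (Finset.Icc 1 (n + j)) ≤ cnt A (Finset.Icc 1 n) + j := by
  unfold cnt
  have hsub : (Finset.Icc 1 (n + j)).filter (· ∈ A) ⊆
      ((Finset.Icc 1 n).filter (· ∈ A)) ∪ Finset.Ioc n (n + j) := by
    intro x hx
    simp only [Finset.mem_filter, Finset.mem_Icc, Finset.mem_union, Finset.mem_Ioc] at hx ⊢
    obtain ⟨⟨h1, h2⟩, hA⟩ := hx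
    rcases le_or_gt x n with h | h
    · exact Or.inl ⟨⟨h1, h⟩, hA⟩
    · exact Or.inr ⟨h, h2⟩
  calc ((Finset.Icc 1 (n + j)).filter (· ∈ A)).card
      ≤ (((Finset.Icc 1 n).filter (· ∈ A)) ∪ Finset.Ioc n (n + j)).card := Finset.card_le_card hsub
    _ ≤ ((Finset.Icc 1 n).filter (· ∈ A)).card + (Finset.Ioc n (n + j)).card :=
        Finset.card_union_le _ _
    _ = ((Finset.Icc 1 n).filter (· ∈ A)).card + j := by rw [Nat.card_Ioc]; omega

lemma cnt_shift_le (A : Set ℕ) (k : ℤ) (n : ℕ) :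
    cnt (shiftSet A k) (Finset.Icc 1 n) ≤ cnt A (Finset.Icc 1 n) + (k.natAbs + 1) := by
  have step1 : cnt (shiftSet A k) (Finset.Icc 1 n) ≤ cnt A (Finset.Icc 0 (n + k.natAbs)) := by
    unfold cnt
    refine Finset.card_le_card_of_injOn (fun x => ((x : ℤ) - k).toNat) ?_ ?_
    · intro x hx
      simp only [Finset.mem_coe, Finset.mem_filter, Finset.mem_Icc] at hx ⊢
      obtain ⟨⟨hx1, hx2⟩, a, ha, hak⟩ := hx
      have hxa : ((x : ℤ) - k).toNat = a := by omega
      rw [hxa]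
      exact ⟨⟨Nat.zero_le _, by omega⟩, ha⟩
    · intro x hx y hy hxy
      simp only [Finset.coe_filter, Set.mem_setOf_eq, Finset.mem_Icc] at hx hy
      obtain ⟨_, a, ha, hak⟩ := hx
      obtain ⟨_, b, hb, hbk⟩ := hy
      simp only at hxy
      omega
  have step2 : cnt A (Finset.Icc 0 (n + k.natAbs)) ≤ cnt A (Finset.Icc 1 (n + k.natAbs)) + 1 := by
    unfold cnt
    have hsub : (Finset.Icc 0 (n + k.natAbs)).filter (· ∈ A) ⊆
        insert 0 (((Finset.Icc 1 (n + k.natAbs)).filter (· ∈ A))) := by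
      intro x hx
      simp only [Finset.mem_filter, Finset.mem_Icc, Finset.mem_insert] at hx ⊢
      rcases Nat.eq_zero_or_pos x with h | h
      · exact Or.inl h
      · exact Or.inr ⟨⟨h, hx.1.2⟩, hx.2⟩
    calc ((Finset.Icc 0 (n + k.natAbs)).filter (· ∈ A)).card
        ≤ (insert 0 (((Finset.Icc 1 (n + k.natAbs)).filter (· ∈ A)))).card :=
          Finset.card_le_card hsub
      _ ≤ _ + 1 := Finset.card_insert_le _ _
  have step3 := cnt_mono_n A n k.natAbs
  omega

lemma mem_shift_shift {A : Set ℕ} {k : ℤ} {a : ℕ} (ha : a ∈ A) (h : 0 ≤ (a : ℤ) + k) :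
    a ∈ shiftSet (shiftSet A k) (-k) :=
  ⟨((a : ℤ) + k).toNat, ⟨a, ha, by omega⟩, by omega⟩

lemma cnt_le_shift (A : Set ℕ) (k : ℤ) (n : ℕ) :
    cnt A (Finset.Icc 1 n) ≤ cnt (shiftSet A k) (Finset.Icc 1 n) + (2 * k.natAbs + 1) := by
  have h1 : cnt A (Finset.Icc 1 n) ≤
      cnt (shiftSet (shiftSet A k) (-k)) (Finset.Icc 1 n) + k.natAbs := by
    unfold cnt
    have hsub : (Finset.Icc 1 n).filter (· ∈ A) ⊆
        ((Finset.Icc 1 n).filter (· ∈ shiftSet (shiftSet A k) (-k))) ∪ Finset.Icc 1 k.natAbs := by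
      intro x hx
      simp only [Finset.mem_filter, Finset.mem_Icc, Finset.mem_union] at hx ⊢
      rcases le_or_gt 0 ((x : ℤ) + k) with h | h
      · exact Or.inl ⟨hx.1, mem_shift_shift hx.2 h⟩
      · exact Or.inr ⟨hx.1.1, by omega⟩
    calc ((Finset.Icc 1 n).filter (· ∈ A)).card
        ≤ _ := Finset.card_le_card hsub
      _ ≤ ((Finset.Icc 1 n).filter (· ∈ shiftSet (shiftSet A k) (-k))).card
            + (Finset.Icc 1 k.natAbs).card := Finset.card_union_le _ _
      _ = _ + k.natAbs := by rw [Nat.card_Icc]; omega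
  have h2 := cnt_shift_le (shiftSet A k) (-k) n
  rw [Int.natAbs_neg] at h2
  omega

lemma dFn_shift_bound (A : Set ℕ) (k : ℤ) (n : ℕ) :
    |dFn (shiftSet A k) n - dFn A n| ≤ (2 * k.natAbs + 1 : ℝ) / n := by
  rcases Nat.eq_zero_or_pos n with h | h
  · simp [h, dFn]
  have hn : (0 : ℝ) < n := by exact_mod_cast h
  rw [abs_sub_le_iff]
  constructor
  · have hc := cnt_shift_le A k n
    have heq : dFn (shiftSet A k) n - dFn A n
        = ((cnt (shiftSet A k) (Finset.Icc 1 n) : ℝ) - (cnt A (Finset.Icc 1 n) : ℝ)) / n := by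
      unfold dFn; ring
    rw [heq]
    apply div_le_div_of_nonneg_right ?_ hn.le
    have : (cnt (shiftSet A k) (Finset.Icc 1 n) : ℝ)
        ≤ (cnt A (Finset.Icc 1 n) : ℝ) + ((k.natAbs : ℝ) + 1) := by exact_mod_cast hc
    linarith
  · have hc := cnt_le_shift A k n
    have heq : dFn A n - dFn (shiftSet A k) n
        = ((cnt A (Finset.Icc 1 n) : ℝ) - (cnt (shiftSet A k) (Finset.Icc 1 n) : ℝ)) / n := by
      unfold dFn; ring
    rw [heq]
    apply div_le_div_of_nonneg_right ?_ hn.le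
    have : (cnt A (Finset.Icc 1 n) : ℝ)
        ≤ (cnt (shiftSet A k) (Finset.Icc 1 n) : ℝ) + (2 * (k.natAbs : ℝ) + 1) := by
      exact_mod_cast hc
    linarith

theorem stmt13 (J : Set (Set ℕ)) (hJ : MaximalIdeal J) (δ : Set ℕ → ℝ)
    (hδ : ∀ A : Set ℕ, ∀ ε > (0:ℝ),
      {n : ℕ | ε ≤ |((Finset.Icc 1 n).filter (· ∈ A)).card / (n:ℝ) - δ A|} ∈ J) :
    TransInvIdeal (ZSet δ) ∧
    (∀ 𝒜 : Set (Set ℕ), IsADFamily (ZSet δ) 𝒜 → 𝒜.Countable) ∧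
    ¬ ∃ 𝒜 : Set (Set ℕ), IsTADFamily (ZSet δ) 𝒜 ∧ Cardinal.mk 𝒜 = Cardinal.continuum := by
  obtain ⟨⟨hun, hsubJ, hfinJ, hunivJ⟩, -⟩ := hJ
  -- the dual filter of J
  let F : Filter ℕ :=
    { sets := {s | sᶜ ∈ J}
      univ_sets := by simpa using hfinJ ∅ Set.finite_empty
      sets_of_superset := fun hs hst => hsubJ _ _ (Set.compl_subset_compl.mpr hst) hs
      inter_sets := fun hs ht => by
        simp only [Set.mem_setOf_eq, Set.compl_inter]
        exact hun _ _ hs ht }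
  have hmemF : ∀ s : Set ℕ, s ∈ F ↔ sᶜ ∈ J := fun s => Iff.rfl
  haveI hFne : F.NeBot := by
    refine ⟨fun h => hunivJ ?_⟩
    have : (∅ : Set ℕ) ∈ F := by rw [h]; exact Filter.mem_bot
    simpa using (hmemF ∅).mp this
  have hatTop : ∀ (g : ℕ → ℝ) (a : ℝ), Filter.Tendsto g atTop (nhds a) →
      Filter.Tendsto g F (nhds a) := by
    intro g a h
    refine h.mono_left ?_
    rw [← Nat.cofinite_eq_atTop]
    intro s hs
    rw [hmemF]
    exact hfinJ _ (by simpa using hs)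
  have htd : ∀ A : Set ℕ, Filter.Tendsto (dFn A) F (nhds (δ A)) := by
    intro A
    rw [Metric.tendsto_nhds]
    intro ε hε
    have h := hδ A ε hε
    rw [Filter.eventually_iff, hmemF]
    have hset : {n : ℕ | dist (dFn A n) (δ A) < ε}ᶜ
        = {n : ℕ | ε ≤ |((Finset.Icc 1 n).filter (· ∈ A)).card / (n:ℝ) - δ A|} := by
      ext n
      simp only [Set.mem_compl_iff, Set.mem_setOf_eq, Real.dist_eq, not_lt, dFn, cnt]
    rw [hset]
    exact h
  have h0 : ∀ A, 0 ≤ δ A := fun A => ge_of_tendsto' (htd A) (dFn_nonneg A)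
  have hmonoδ : ∀ A B : Set ℕ, A ⊆ B → δ A ≤ δ B := fun A B h =>
    le_of_tendsto_of_tendsto' (htd A) (htd B) (dFn_mono h)
  have hmodδ : ∀ A B : Set ℕ, δ (A ∪ B) + δ (A ∩ B) = δ A + δ B := by
    intro A B
    have t1 : Filter.Tendsto (fun n => dFn (A ∪ B) n + dFn (A ∩ B) n) F
        (nhds (δ (A ∪ B) + δ (A ∩ B))) := (htd _).add (htd _)
    have t2 : Filter.Tendsto (fun n => dFn A n + dFn B n) F (nhds (δ A + δ B)) :=
      (htd _).add (htd _)
    have he : (fun n => dFn (A ∪ B) n + dFn (A ∩ B) n) = fun n => dFn A n + dFn B n :=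
      funext (dFn_modular A B)
    rw [he] at t1
    exact tendsto_nhds_unique t1 t2
  have hsubaddδ : ∀ A B : Set ℕ, δ (A ∪ B) ≤ δ A + δ B := by
    intro A B
    have h1 := hmodδ A B
    have h2 := h0 (A ∩ B)
    linarith
  have hfinδ : ∀ A : Set ℕ, A.Finite → δ A = 0 := by
    intro A hA
    have hub : ∀ n, dFn A n ≤ (hA.toFinset.card : ℝ) / n := by
      intro n
      unfold dFn
      refine div_le_div_of_nonneg_right ?_ (Nat.cast_nonneg n)
      have hc : cnt A (Finset.Icc 1 n) ≤ hA.toFinset.card := by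
        unfold cnt
        apply Finset.card_le_card
        intro x hx
        rw [Set.Finite.mem_toFinset]
        exact (Finset.mem_filter.mp hx).2
      exact_mod_cast hc
    have t0 : Filter.Tendsto (dFn A) F (nhds 0) :=
      tendsto_of_tendsto_of_tendsto_of_le_of_le tendsto_const_nhds
        (hatTop _ _ (tendsto_const_div_atTop_nhds_zero_nat _)) (dFn_nonneg A) hub
    exact tendsto_nhds_unique (htd A) t0
  have hunivδ : δ Set.univ = 1 := by
    have hev : {n : ℕ | dFn Set.univ n = 1} ∈ F := by
      rw [hmemF]
      apply hfinJ
      apply Set.Finite.subset (Set.finite_singleton 0)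
      intro n hn
      simp only [Set.mem_compl_iff, Set.mem_setOf_eq] at hn
      simp only [Set.mem_singleton_iff]
      by_contra h0'
      apply hn
      have hn1 : 0 < n := Nat.pos_of_ne_zero h0'
      unfold dFn
      rw [cnt_univ]
      exact div_self (by exact_mod_cast hn1.ne')
    have t1 : Filter.Tendsto (dFn Set.univ) F (nhds 1) := by
      refine Filter.Tendsto.congr' ?_ (tendsto_const_nhds : Filter.Tendsto (fun _ : ℕ => (1:ℝ)) F (nhds 1))
      exact (Filter.eventually_iff.mpr hev).mono fun n h => h.symm
    exact tendsto_nhds_unique (htd Set.univ) t1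
  have hshiftδ : ∀ (A : Set ℕ) (k : ℤ), δ (shiftSet A k) = δ A := by
    intro A k
    have hub : Filter.Tendsto (fun n : ℕ => (2 * (k.natAbs : ℝ) + 1) / n) F (nhds 0) :=
      hatTop _ _ (tendsto_const_div_atTop_nhds_zero_nat _)
    have hlb : Filter.Tendsto (fun n : ℕ => -((2 * (k.natAbs : ℝ) + 1) / n)) F (nhds 0) := by
      simpa using hub.neg
    have tb : Filter.Tendsto (fun n => dFn (shiftSet A k) n - dFn A n) F (nhds 0) :=
      tendsto_of_tendsto_of_tendsto_of_le_of_le hlb hub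
        (fun n => (abs_le.mp (dFn_shift_bound A k n)).1)
        (fun n => (abs_le.mp (dFn_shift_bound A k n)).2)
    have t2 : Filter.Tendsto (fun n => dFn (shiftSet A k) n - dFn A n) F
        (nhds (δ (shiftSet A k) - δ A)) := (htd _).sub (htd _)
    have := tendsto_nhds_unique t2 tb
    linarith
  -- membership in ZSet
  have hZ : ∀ A : Set ℕ, A ∈ ZSet δ ↔ δ A = 0 := fun A => Iff.rfl
  -- Part 2 first (used in part 3)
  have hδpos : ∀ 𝒜 : Set (Set ℕ), IsADFamily (ZSet δ) 𝒜 → ∀ A ∈ 𝒜, 0 < δ A := by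
    intro 𝒜 h𝒜 A hA
    exact lt_of_le_of_ne (h0 A) (Ne.symm (h𝒜.1 A hA))
  have hnullU : ∀ (S : Finset (Set ℕ)), (∀ B ∈ S, δ B = 0) → δ (⋃₀ ↑S) = 0 := by
    intro S
    induction S using Finset.induction_on with
    | empty => intro _; simpa using hfinδ ∅ Set.finite_empty
    | @insert A S hA ih =>
      intro h
      rw [Finset.coe_insert, Set.sUnion_insert]
      have h1 : δ A = 0 := h A (Finset.mem_insert_self _ _)
      have h2 : δ (⋃₀ ↑S) = 0 := ih fun B hB => h B (Finset.mem_insert_of_mem hB)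
      have h3 := hsubaddδ A (⋃₀ ↑S)
      have h4 := h0 (A ∪ ⋃₀ ↑S)
      linarith
  have key : ∀ S : Finset (Set ℕ), (∀ A ∈ S, ∀ B ∈ S, A ≠ B → δ (A ∩ B) = 0) →
      ∑ A ∈ S, δ A ≤ δ (⋃₀ ↑S) := by
    intro S
    induction S using Finset.induction_on with
    | empty => intro _; simpa using h0 _
    | @insert A S hA ih =>
      intro h
      rw [Finset.coe_insert, Set.sUnion_insert, Finset.sum_insert hA]
      have hint : δ (A ∩ ⋃₀ ↑S) = 0 := by
        have heq : A ∩ ⋃₀ ↑S = ⋃₀ ↑(S.image fun B => A ∩ B) := by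
          ext x
          simp only [Set.mem_inter_iff, Set.mem_sUnion, Finset.coe_image, Set.mem_image,
            Finset.mem_coe]
          constructor
          · rintro ⟨hx, t, ht, hxt⟩
            exact ⟨A ∩ t, ⟨t, ht, rfl⟩, hx, hxt⟩
          · rintro ⟨B, ⟨t, ht, rfl⟩, hx, hxt⟩
            exact ⟨hx, t, ht, hxt⟩
        rw [heq]
        apply hnullU
        intro B hB
        obtain ⟨C, hC, rfl⟩ := Finset.mem_image.mp hB
        have hAC : A ≠ C := fun e => hA (e ▸ hC)
        exact h A (Finset.mem_insert_self _ _) C (Finset.mem_insert_of_mem hC) hAC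
      have hmod := hmodδ A (⋃₀ ↑S)
      have hih := ih fun X hX Y hY hXY =>
        h X (Finset.mem_insert_of_mem hX) Y (Finset.mem_insert_of_mem hY) hXY
      linarith
  have hcountable : ∀ 𝒜 : Set (Set ℕ), IsADFamily (ZSet δ) 𝒜 → 𝒜.Countable := by
    intro 𝒜 h𝒜
    have hslice : ∀ m : ℕ, {A | A ∈ 𝒜 ∧ 1 / (m + 1 : ℝ) ≤ δ A}.Finite := by
      intro m
      by_contra hinf
      obtain ⟨T, hT, hTcard⟩ := Set.Infinite.exists_subset_card_eq hinf (m + 2)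
      have hsum : ∑ A ∈ T, δ A ≤ 1 := by
        refine (key T ?_).trans ?_
        · intro X hX Y hY hXY
          exact h𝒜.2 X (hT hX).1 Y (hT hY).1 hXY
        · calc δ (⋃₀ ↑T) ≤ δ Set.univ := hmonoδ _ _ (Set.subset_univ _)
            _ = 1 := hunivδ
      have hge : (T.card : ℝ) * (1 / (m + 1 : ℝ)) ≤ ∑ A ∈ T, δ A := by
        have := Finset.card_nsmul_le_sum T (fun A => δ A) (1 / (m + 1 : ℝ))
          (fun A hA => (hT hA).2)
        simpa [nsmul_eq_mul] using this
      rw [hTcard] at hge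
      have hm1 : (0:ℝ) < m + 1 := by positivity
      have hgt : (1:ℝ) < ((m + 2 : ℕ) : ℝ) * (1 / (m + 1 : ℝ)) := by
        rw [mul_one_div, lt_div_iff₀ hm1]
        push_cast
        linarith
      linarith
    have hcover : 𝒜 ⊆ ⋃ m : ℕ, {A | A ∈ 𝒜 ∧ 1 / (m + 1 : ℝ) ≤ δ A} := by
      intro A hA
      obtain ⟨m, hm⟩ := exists_nat_one_div_lt (hδpos 𝒜 h𝒜 A hA)
      exact Set.mem_iUnion.mpr ⟨m, hA, hm.le⟩
    exact Set.Countable.mono hcover (Set.countable_iUnion fun m => (hslice m).countable)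
  refine ⟨⟨⟨?_, ?_, ?_, ?_⟩, ?_⟩, hcountable, ?_⟩
  · intro A B hA hB
    have h1 := hsubaddδ A B
    have h2 := h0 (A ∪ B)
    have hA' : δ A = 0 := hA
    have hB' : δ B = 0 := hB
    show δ (A ∪ B) = 0
    linarith
  · intro A B hAB hB
    have hB' : δ B = 0 := hB
    show δ A = 0
    have := hmonoδ A B hAB
    have := h0 A
    linarith
  · exact fun A hA => hfinδ A hA
  · intro h
    have : δ Set.univ = 0 := h
    rw [hunivδ] at this
    exact one_ne_zero this
  · intro A hA k
    show δ (shiftSet A k) = 0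
    rw [hshiftδ]
    exact hA
  · rintro ⟨𝒜, ⟨hpos, hTAD⟩, hcard⟩
    have hAD : IsADFamily (ZSet δ) 𝒜 := by
      refine ⟨hpos, ?_⟩
      intro A hA B hB hAB
      have h := hTAD A hA B hB hAB 0
      have hB0 : shiftSet B 0 = B := by
        ext n
        constructor
        · rintro ⟨a, ha, hak⟩
          have : a = n := by omega
          exact this ▸ ha
        · intro hn
          exact ⟨n, hn, by simp⟩
      rwa [hB0] at h
    have hle : Cardinal.mk 𝒜 ≤ Cardinal.aleph0 := (hcountable 𝒜 hAD).le_aleph0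
    rw [hcard] at hle
    exact absurd hle (not_le.mpr Cardinal.aleph0_lt_continuum)
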